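/- Let g ∈ L¹(ℝ^N) be nonnegative with ∫_{ℝ^N} log(1 + |y|) g(y) dy < +∞. Then the function φ(x) = ∫_{ℝ^N} log(1/|x - y|) g(y) dy satisfies ∫_{ℝ^N} |φ(x)| / (1 + |x|^{N+2γ}) dx < +∞ for every γ > 0. -/

import Mathlib

open Real MeasureTheory Metric Set
open scoped ENNReal


lemma aux_abs_log_inv (r : ℝ) (hr : 0 ≤ r) :
    |Real.log (1/r)| ≤ Real.log (1+r) + Real.log (1+1/r) := by
  rcases eq_or_lt_of_le hr with h | h
  · simp [← h]
  · have la : 0 ≤ Real.log (1 + 1/r) := Real.log_nonneg (le_add_of_nonneg_right (by positivity))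
    have lb : 0 ≤ Real.log (1 + r) := Real.log_nonneg (by linarith)
    have h1 : Real.log (1/r) = Real.log (1+1/r) - Real.log (1+r) := by
      rw [← Real.log_div (by positivity) (by positivity)]
      congr 1
      field_simp
      ring
    rw [h1]
    rw [abs_le]
    constructor <;> [skip; skip] <;> cases abs_cases (Real.log (1+1/r) - Real.log (1+r)) <;> linarith

lemma aux_log_triangle {E : Type*} [NormedAddCommGroup E] (x y : E) :
    Real.log (1+‖x-y‖) ≤ Real.log (1+‖x‖) + Real.log (1+‖y‖) := by
  rw [← Real.log_mul (by positivity) (by positivity)]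
  apply Real.log_le_log (by positivity)
  have h := norm_sub_le x y
  have hx := norm_nonneg x
  have hy := norm_nonneg y
  nlinarith

lemma aux_log_le_rpow (t γ : ℝ) (ht : 0 ≤ t) (hγ : 0 < γ) :
    Real.log (1+t) ≤ (1+t) ^ γ / γ := by
  have h0 : (0:ℝ) < 1 + t := by linarith
  have h1 : Real.log (1+t) = (Real.log ((1+t) ^ γ)) / γ := by
    rw [Real.log_rpow h0]
    field_simp
  rw [h1]
  have h2 : Real.log ((1+t) ^ γ) ≤ (1+t) ^ γ - 1 :=
    Real.log_le_sub_one_of_pos (Real.rpow_pos_of_pos h0 γ)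
  have h3 : (1+t)^γ - 1 ≤ (1+t)^γ := by linarith
  gcongr
  linarith

lemma aux_two_rpow (t a : ℝ) (ht : 0 ≤ t) (ha : 0 < a) :
    (1+t) ^ a ≤ 2 ^ a * (1 + t ^ a) := by
  have h1 : (1:ℝ) + t ≤ 2 * max 1 t := by
    have := le_max_left (1:ℝ) t
    have := le_max_right (1:ℝ) t
    linarith
  have h2 : (1+t) ^ a ≤ (2 * max 1 t) ^ a :=
    Real.rpow_le_rpow (by linarith) h1 ha.le
  have h3 : (2 * max 1 t) ^ a = 2 ^ a * (max 1 t) ^ a :=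
    Real.mul_rpow (by norm_num) (le_trans zero_le_one (le_max_left 1 t))
  have h4 : (max 1 t) ^ a ≤ 1 + t ^ a := by
    rcases le_total t 1 with h | h
    · rw [max_eq_left h]
      rw [Real.one_rpow]
      have : 0 ≤ t ^ a := Real.rpow_nonneg ht a
      linarith
    · rw [max_eq_right h]
      have : 0 ≤ (1:ℝ) := zero_le_one
      linarith [Real.rpow_nonneg ht a]
  calc (1+t)^a ≤ 2^a * (max 1 t)^a := by rw [← h3]; exact h2
    _ ≤ 2^a * (1 + t^a) := by
        have : (0:ℝ) < 2 ^ a := Real.rpow_pos_of_pos two_pos a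
        nlinarith

lemma aux_key1 (t γ b : ℝ) (ht : 0 ≤ t) (hγ : 0 < γ) (hb : 0 < b) :
    Real.log (1+t) ≤ (2 ^ (b+γ) / γ) * ((1+t) ^ (-b) * (1 + t ^ (b+γ))) := by
  have h0 : (0:ℝ) < 1 + t := by linarith
  have h1 : Real.log (1+t) ≤ (1+t) ^ γ / γ := by
    have := Real.log_le_sub_one_of_pos (Real.rpow_pos_of_pos h0 γ)
    rw [Real.log_rpow h0] at this
    have h2 : Real.log (1+t) ≤ ((1+t)^γ - 1)/γ := by
      rw [le_div_iff₀ hγ]; nlinarith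
    have h3 : ((1+t)^γ - 1)/γ ≤ (1+t)^γ/γ := by gcongr; linarith
    linarith
  have h4 : (1+t) ^ γ = (1+t) ^ (b+γ) * (1+t) ^ (-b) := by
    rw [← Real.rpow_add h0]; ring_nf
  have h5 : (1+t) ^ (b+γ) ≤ 2 ^ (b+γ) * (1 + t ^ (b+γ)) := by
    have := aux_two_rpow t (b+γ) ht (by linarith)
    exact this
  have h6 : (0:ℝ) ≤ (1+t) ^ (-b) := Real.rpow_nonneg h0.le _
  calc Real.log (1+t) ≤ (1+t)^γ / γ := h1
    _ = ((1+t) ^ (b+γ) * (1+t) ^ (-b)) / γ := by rw [h4]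
    _ ≤ ((2 ^ (b+γ) * (1 + t ^ (b+γ))) * (1+t) ^ (-b)) / γ := by
        gcongr
    _ = (2 ^ (b+γ) / γ) * ((1+t) ^ (-b) * (1 + t ^ (b+γ))) := by ring

lemma aux_key2 (t γ b : ℝ) (ht : 0 ≤ t) (hγ : 0 ≤ γ) (hb : 0 < b) :
    1 ≤ 2 ^ (b+γ) * ((1+t) ^ (-b) * (1 + t ^ (b+γ))) := by
  have h0 : (0:ℝ) < 1 + t := by linarith
  have h1 : (1+t) ^ b ≤ (1+t) ^ (b+γ) :=
    Real.rpow_le_rpow_of_exponent_le (by linarith) (by linarith)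
  have h5 : (1+t) ^ (b+γ) ≤ 2 ^ (b+γ) * (1 + t ^ (b+γ)) := aux_two_rpow t (b+γ) ht (by linarith)
  have h6 : (0:ℝ) ≤ (1+t) ^ (-b) := Real.rpow_nonneg h0.le _
  have h7 : (1+t) ^ b * (1+t) ^ (-b) = 1 := by
    rw [← Real.rpow_add h0]; simp
  calc (1:ℝ) = (1+t) ^ b * (1+t) ^ (-b) := h7.symm
    _ ≤ (2 ^ (b+γ) * (1 + t ^ (b+γ))) * (1+t) ^ (-b) := by gcongr; exact h1.trans h5
    _ = 2 ^ (b+γ) * ((1+t) ^ (-b) * (1 + t ^ (b+γ))) := by ring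

lemma aux_m1 {N : ℕ} (hN : 1 ≤ N) :
    ∫⁻ z : EuclideanSpace ℝ (Fin N) in ball 0 1,
      ENNReal.ofReal (Real.log (1 + 1/‖z‖)) ∂volume < ∞ := by
  set μ := (volume : Measure (EuclideanSpace ℝ (Fin N))).restrict (ball 0 1) with hμ
  have f_nn : (0 : EuclideanSpace ℝ (Fin N) → ℝ) ≤ᵐ[μ]
      fun z => Real.log (1 + 1/‖z‖) :=
    Filter.Eventually.of_forall fun z =>
      Real.log_nonneg (le_add_of_nonneg_right (by positivity))
  have kmeas : Measurable (fun z : EuclideanSpace ℝ (Fin N) => Real.log (1 + 1/‖z‖)) := by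
    simp only [one_div]
    exact Real.measurable_log.comp (measurable_const.add measurable_norm.inv)
  have f_mble : AEMeasurable (fun z : EuclideanSpace ℝ (Fin N) => Real.log (1 + 1/‖z‖)) μ :=
    kmeas.aemeasurable
  rw [lintegral_eq_lintegral_meas_le μ f_nn f_mble]
  have hsub : Ioi (0:ℝ) ⊆ Ioc 0 1 ∪ Ioi 1 := Ioi_subset_Ioc_union_Ioi
  calc ∫⁻ t in Ioi (0:ℝ), μ {a | t ≤ Real.log (1 + 1/‖a‖)}
      ≤ ∫⁻ t in Ioc (0:ℝ) 1 ∪ Ioi 1, μ {a | t ≤ Real.log (1 + 1/‖a‖)} :=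
        lintegral_mono_set hsub
    _ ≤ (∫⁻ t in Ioc (0:ℝ) 1, μ {a | t ≤ Real.log (1 + 1/‖a‖)})
        + ∫⁻ t in Ioi (1:ℝ), μ {a | t ≤ Real.log (1 + 1/‖a‖)} := lintegral_union_le _ _ _
    _ < ∞ := ENNReal.add_lt_top.2 ⟨?_, ?_⟩
  · -- small t: bound by measure of unit ball
    have hb : ∀ t : ℝ, μ {a | t ≤ Real.log (1 + 1/‖a‖)} ≤ volume (ball (0:EuclideanSpace ℝ (Fin N)) 1) :=
      fun t => (measure_mono (subset_univ _)).trans_eq (Measure.restrict_apply_univ _)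
    calc ∫⁻ t in Ioc (0:ℝ) 1, μ {a | t ≤ Real.log (1 + 1/‖a‖)}
        ≤ ∫⁻ _ in Ioc (0:ℝ) 1, volume (ball (0:EuclideanSpace ℝ (Fin N)) 1) :=
          lintegral_mono fun t => hb t
      _ = volume (ball (0:EuclideanSpace ℝ (Fin N)) 1) * volume (Ioc (0:ℝ) 1) :=
          setLIntegral_const _ _
      _ < ∞ := ENNReal.mul_lt_top measure_ball_lt_top (by simp)
  · -- large t
    have hSmeas : ∀ t : ℝ, MeasurableSet {a : EuclideanSpace ℝ (Fin N) | t ≤ Real.log (1 + 1/‖a‖)} :=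
      fun t => measurableSet_le measurable_const kmeas
    have key : ∀ t ∈ Ioi (1:ℝ), μ {a | t ≤ Real.log (1 + 1/‖a‖)}
        ≤ ENNReal.ofReal (4 * t ^ (-2:ℝ)) * volume (ball (0:EuclideanSpace ℝ (Fin N)) 1) := by
      intro t ht
      rw [mem_Ioi] at ht
      have ht0 : (0:ℝ) < t := lt_trans one_pos ht
      have hexp : (1:ℝ) < Real.exp t - 1 := by
        have h1 := Real.add_one_le_exp t
        have h2 := Real.add_one_le_exp (t/2)
        have h3 : Real.exp t = Real.exp (t/2) * Real.exp (t/2) := by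
          rw [← Real.exp_add]; ring_nf
        nlinarith
      set r : ℝ := 1 / (Real.exp t - 1) with hrdef
      have hr0 : 0 < r := by positivity
      have hr1 : r ≤ 1 := by
        rw [hrdef, div_le_one (by linarith)]; linarith
      have hsub2 : {a : EuclideanSpace ℝ (Fin N) | t ≤ Real.log (1 + 1/‖a‖)}
          ⊆ closedBall 0 r := by
        intro a ha
        simp only [mem_setOf_eq] at ha
        have hu : (0:ℝ) < 1 + 1/‖a‖ := by positivity
        have h4 : Real.exp t ≤ 1 + 1/‖a‖ := by
          calc Real.exp t ≤ Real.exp (Real.log (1 + 1/‖a‖)) := Real.exp_le_exp.mpr ha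
            _ = 1 + 1/‖a‖ := Real.exp_log hu
        have hna : (0:ℝ) < ‖a‖ := by
          rcases eq_or_lt_of_le (norm_nonneg a) with h | h
          · exfalso; rw [← h] at h4; simp at h4; linarith
          · exact h
        rw [mem_closedBall_zero_iff, hrdef, le_div_iff₀ (by linarith)]
        have h5 : Real.exp t - 1 ≤ 1/‖a‖ := by linarith
        calc ‖a‖ * (Real.exp t - 1) ≤ ‖a‖ * (1/‖a‖) := by nlinarith
          _ = 1 := by field_simp
      have hmeasle : μ {a | t ≤ Real.log (1 + 1/‖a‖)}
          ≤ volume (closedBall (0:EuclideanSpace ℝ (Fin N)) r) := by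
        rw [hμ, Measure.restrict_apply (hSmeas t)]
        exact measure_mono (inter_subset_left.trans hsub2)
      have hvol : volume (closedBall (0:EuclideanSpace ℝ (Fin N)) r)
          = ENNReal.ofReal (r ^ (Module.finrank ℝ (EuclideanSpace ℝ (Fin N))))
            * volume (ball (0:EuclideanSpace ℝ (Fin N)) 1) :=
        Measure.addHaar_closedBall _ _ hr0.le
      have hpow : r ^ (Module.finrank ℝ (EuclideanSpace ℝ (Fin N))) ≤ 4 * t ^ (-2:ℝ) := by
        have hfr : Module.finrank ℝ (EuclideanSpace ℝ (Fin N)) = N := finrank_euclideanSpace_fin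
        rw [hfr]
        have h6 : r ^ N ≤ r ^ 1 := pow_le_pow_of_le_one hr0.le hr1 hN
        rw [pow_one] at h6
        have h7 : r ≤ 4 * t ^ (-2:ℝ) := by
          have hts : t ^ (-2:ℝ) = (t^(2:ℕ))⁻¹ := by
            rw [← Real.rpow_natCast t 2, ← Real.rpow_neg ht0.le]
            norm_num
          rw [hts, hrdef]
          rw [div_le_iff₀ (by linarith)]
          have h2 := Real.add_one_le_exp (t/2)
          have h3 : Real.exp t = Real.exp (t/2) * Real.exp (t/2) := by
            rw [← Real.exp_add]; ring_nf
          have h8 : t^2/4 ≤ Real.exp t - 1 := by nlinarith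
          have h9 : (0:ℝ) < t^(2:ℕ) := by positivity
          calc (1:ℝ) = 4 * (t^(2:ℕ))⁻¹ * (t^2/4) := by field_simp
            _ ≤ 4 * (t^(2:ℕ))⁻¹ * (Real.exp t - 1) := by gcongr
          
        exact h6.trans h7
      calc μ {a | t ≤ Real.log (1 + 1/‖a‖)} ≤ volume (closedBall (0:EuclideanSpace ℝ (Fin N)) r) := hmeasle
        _ = _ * _ := hvol
        _ ≤ ENNReal.ofReal (4 * t ^ (-2:ℝ)) * volume (ball (0:EuclideanSpace ℝ (Fin N)) 1) :=
            mul_le_mul_left (ENNReal.ofReal_le_ofReal hpow) _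
    calc ∫⁻ t in Ioi (1:ℝ), μ {a | t ≤ Real.log (1 + 1/‖a‖)}
        ≤ ∫⁻ t in Ioi (1:ℝ), ENNReal.ofReal (4 * t ^ (-2:ℝ)) * volume (ball (0:EuclideanSpace ℝ (Fin N)) 1) := by
          refine setLIntegral_mono (by fun_prop) key
      _ = (∫⁻ t in Ioi (1:ℝ), ENNReal.ofReal (4 * t ^ (-2:ℝ))) * volume (ball (0:EuclideanSpace ℝ (Fin N)) 1) := by
          rw [lintegral_mul_const'' _ (by fun_prop)]
      _ < ∞ := by
          refine ENNReal.mul_lt_top ?_ measure_ball_lt_top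
          refine IntegrableOn.setLIntegral_lt_top ?_
          exact (integrableOn_Ioi_rpow_of_lt (by norm_num) one_pos).const_mul 4

theorem stmt_14 (N : ℕ) (hN : 1 ≤ N)
    (g : EuclideanSpace ℝ (Fin N) → ℝ) (hg : Integrable g)
    (hgnonneg : ∀ y, 0 ≤ g y)
    (hlog : Integrable (fun y => Real.log (1 + ‖y‖) * g y))
    (φ : EuclideanSpace ℝ (Fin N) → ℝ)
    (hφ : ∀ x, φ x = ∫ y, Real.log (1 / ‖x - y‖) * g y) :
    ∀ γ : ℝ, 0 < γ →
      Integrable (fun x => |φ x| / (1 + ‖x‖ ^ ((N : ℝ) + 2 * γ))) := by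
  intro γ hγ
  have hN1 : (1:ℝ) ≤ (N:ℝ) := by exact_mod_cast hN
  set a : ℝ := (N:ℝ) + 2*γ with ha_def
  have ha1 : 1 ≤ a := by rw [ha_def]; linarith
  have ha0 : 0 < a := by linarith
  set b : ℝ := (N:ℝ) + γ with hb_def
  have hb0 : 0 < b := by rw [hb_def]; linarith
  have hab : b + γ = a := by rw [ha_def, hb_def]; ring
  -- measurable nonnegative representative of g
  have hgm := hg.aestronglyMeasurable.aemeasurable
  set g₁ : EuclideanSpace ℝ (Fin N) → ℝ := fun y => max (hgm.mk g y) 0 with hg₁_def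
  have hg₁meas : Measurable g₁ := hgm.measurable_mk.max measurable_const
  have hgg₁ : g =ᵐ[volume] g₁ := by
    filter_upwards [hgm.ae_eq_mk] with y hy
    rw [hg₁_def]
    simp only
    rw [← hy]
    exact (max_eq_left (hgnonneg y)).symm
  have hg₁nonneg : ∀ y, 0 ≤ g₁ y := fun y => le_max_right _ _
  have hg₁int : Integrable g₁ := hg.congr hgg₁
  have hφ' : ∀ x, φ x = ∫ y, Real.log (1/‖x-y‖) * g₁ y := by
    intro x
    rw [hφ x]
    apply integral_congr_ae
    filter_upwards [hgg₁] with y hy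
    rw [hy]
  -- ENNReal versions
  set G : EuclideanSpace ℝ (Fin N) → ℝ≥0∞ := fun y => ENNReal.ofReal (g₁ y) with hG_def
  have hGmeas : Measurable G := ENNReal.measurable_ofReal.comp hg₁meas
  set D : EuclideanSpace ℝ (Fin N) → ℝ := fun x => 1 + ‖x‖ ^ a with hD_def
  have hD1 : ∀ x, 1 ≤ D x := fun x => le_add_of_nonneg_right (Real.rpow_nonneg (norm_nonneg _) _)
  have hD0 : ∀ x, 0 < D x := fun x => lt_of_lt_of_le one_pos (hD1 x)
  have hDmeas : Measurable D := by
    apply measurable_const.add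
    exact measurable_norm.pow_const a
  set Ew : EuclideanSpace ℝ (Fin N) → ℝ≥0∞ := fun x => ENNReal.ofReal (D x) with hEw_def
  have hEwmeas : Measurable Ew := ENNReal.measurable_ofReal.comp hDmeas
  have hEw1 : ∀ x, 1 ≤ Ew x := fun x => by
    rw [hEw_def]
    simp only
    rw [← ENNReal.ofReal_one]
    exact ENNReal.ofReal_le_ofReal (hD1 x)
  have hEwinv_le_one : ∀ x, (Ew x)⁻¹ ≤ 1 := fun x => ENNReal.inv_le_one.mpr (hEw1 x)
  set ℓe : EuclideanSpace ℝ (Fin N) → ℝ≥0∞ := fun z => ENNReal.ofReal (Real.log (1+‖z‖))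
    with hle_def
  have hℓmeas : Measurable ℓe :=
    ENNReal.measurable_ofReal.comp
      (Real.measurable_log.comp (measurable_const.add measurable_norm))
  set ke : EuclideanSpace ℝ (Fin N) → ℝ≥0∞ := fun z => ENNReal.ofReal (Real.log (1+1/‖z‖))
    with hke_def
  have hkmeas : Measurable ke := by
    apply ENNReal.measurable_ofReal.comp
    simp only [one_div]
    exact Real.measurable_log.comp (measurable_const.add measurable_norm.inv)
  set Itot := ∫⁻ y, G y with hI_def
  have hItot : Itot < ∞ := by
    have h2 := hg₁int.2
    rw [HasFiniteIntegral] at h2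
    refine lt_of_eq_of_lt ?_ h2
    exact lintegral_congr fun y => (Real.enorm_eq_ofReal (hg₁nonneg y)).symm
  set Jtot := ∫⁻ y, ℓe y * G y with hJ_def
  have hJtot : Jtot < ∞ := by
    have hli : Integrable (fun y => Real.log (1+‖y‖) * g₁ y) := by
      apply hlog.congr
      filter_upwards [hgg₁] with y hy
      rw [hy]
    have h2 := hli.2
    rw [HasFiniteIntegral] at h2
    refine lt_of_eq_of_lt ?_ h2
    apply lintegral_congr
    intro y
    have l1 : 0 ≤ Real.log (1+‖y‖) := Real.log_nonneg (by linarith [norm_nonneg y])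
    rw [hle_def, hG_def]
    simp only
    rw [← ENNReal.ofReal_mul l1, Real.enorm_eq_ofReal (mul_nonneg l1 (hg₁nonneg y))]
  -- finiteness of the weight integral
  have hWfin : ∫⁻ x : EuclideanSpace ℝ (Fin N), ENNReal.ofReal ((1+‖x‖) ^ (-b)) ∂volume < ∞ := by
    have hfr : (Module.finrank ℝ (EuclideanSpace ℝ (Fin N)) : ℝ) < b := by
      rw [finrank_euclideanSpace_fin, hb_def]; linarith
    exact finite_integral_one_add_norm hfr
  -- key pointwise bounds
  set C1 : ℝ := 2 ^ a / γ with hC1_def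
  have hC1nonneg : 0 ≤ C1 := by positivity
  have key1 : ∀ x, ℓe x / Ew x ≤ ENNReal.ofReal (C1 * (1+‖x‖) ^ (-b)) := by
    intro x
    apply ENNReal.div_le_of_le_mul'
    rw [hEw_def, hle_def]
    simp only
    rw [← ENNReal.ofReal_mul (hD0 x).le]
    apply ENNReal.ofReal_le_ofReal
    have h := aux_key1 ‖x‖ γ b (norm_nonneg x) hγ hb0
    rw [hab] at h
    calc Real.log (1+‖x‖) ≤ (2 ^ a / γ) * ((1+‖x‖) ^ (-b) * (1 + ‖x‖ ^ a)) := h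
      _ = D x * (C1 * (1+‖x‖) ^ (-b)) := by rw [hC1_def, hD_def]; ring
  have key2 : ∀ x, (Ew x)⁻¹ ≤ ENNReal.ofReal ((2 ^ a) * (1+‖x‖) ^ (-b)) := by
    intro x
    rw [← one_div]
    apply ENNReal.div_le_of_le_mul'
    rw [hEw_def]
    simp only
    rw [← ENNReal.ofReal_mul (hD0 x).le]
    apply ENNReal.one_le_ofReal.mpr
    have h := aux_key2 ‖x‖ γ b (norm_nonneg x) hγ.le hb0
    rw [hab] at h
    calc (1:ℝ) ≤ 2 ^ a * ((1+‖x‖) ^ (-b) * (1 + ‖x‖ ^ a)) := h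
      _ = D x * (2 ^ a * (1+‖x‖) ^ (-b)) := by rw [hD_def]; ring
  have hT1 : ∫⁻ x, ℓe x * (Ew x)⁻¹ ∂volume < ∞ := by
    have hle' : ∀ x, ℓe x * (Ew x)⁻¹ ≤ ENNReal.ofReal C1 * ENNReal.ofReal ((1+‖x‖) ^ (-b)) := by
      intro x
      rw [← div_eq_mul_inv, ← ENNReal.ofReal_mul hC1nonneg]
      exact key1 x
    calc ∫⁻ x, ℓe x * (Ew x)⁻¹ ∂volume
        ≤ ∫⁻ x, ENNReal.ofReal C1 * ENNReal.ofReal ((1+‖x‖) ^ (-b)) ∂volume :=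
          lintegral_mono hle'
      _ = ENNReal.ofReal C1 * ∫⁻ x, ENNReal.ofReal ((1+‖x‖) ^ (-b)) ∂volume :=
          lintegral_const_mul' _ _ ENNReal.ofReal_ne_top
      _ < ∞ := ENNReal.mul_lt_top ENNReal.ofReal_lt_top hWfin
  have hT2 : ∫⁻ x, (Ew x)⁻¹ ∂volume < ∞ := by
    have hle' : ∀ x, (Ew x)⁻¹ ≤ ENNReal.ofReal (2 ^ a) * ENNReal.ofReal ((1+‖x‖) ^ (-b)) := by
      intro x
      rw [← ENNReal.ofReal_mul (by positivity)]
      exact key2 x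
    calc ∫⁻ x, (Ew x)⁻¹ ∂volume
        ≤ ∫⁻ x, ENNReal.ofReal (2 ^ a) * ENNReal.ofReal ((1+‖x‖) ^ (-b)) ∂volume :=
          lintegral_mono hle'
      _ = ENNReal.ofReal (2 ^ a) * ∫⁻ x, ENNReal.ofReal ((1+‖x‖) ^ (-b)) ∂volume :=
          lintegral_const_mul' _ _ ENNReal.ofReal_ne_top
      _ < ∞ := ENNReal.mul_lt_top ENNReal.ofReal_lt_top hWfin
  -- the unit-ball integral of ke
  have hM1 : ∫⁻ z : EuclideanSpace ℝ (Fin N) in Metric.ball 0 1, ke z ∂volume < ∞ := aux_m1 hN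
  set Mtot : ℝ≥0∞ := (∫⁻ z : EuclideanSpace ℝ (Fin N) in Metric.ball 0 1, ke z ∂volume)
      + ENNReal.ofReal (Real.log 2) * ∫⁻ x, (Ew x)⁻¹ ∂volume with hMtot_def
  have hMtot : Mtot < ∞ :=
    ENNReal.add_lt_top.2 ⟨hM1, ENNReal.mul_lt_top ENNReal.ofReal_lt_top hT2⟩
  -- translation invariance
  have htrans : ∀ y : EuclideanSpace ℝ (Fin N),
      ∫⁻ x, (Metric.ball y 1).indicator (fun x => ke (x - y)) x ∂volume
        = ∫⁻ z : EuclideanSpace ℝ (Fin N) in Metric.ball 0 1, ke z ∂volume := by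
    intro y
    have heq : ∀ x : EuclideanSpace ℝ (Fin N),
        (Metric.ball y 1).indicator (fun x => ke (x - y)) x
          = (Metric.ball (0:EuclideanSpace ℝ (Fin N)) 1).indicator ke (x - y) := by
      intro x
      by_cases hx : x ∈ Metric.ball y 1
      · rw [Set.indicator_of_mem hx, Set.indicator_of_mem
          (by simpa [Metric.mem_ball, dist_eq_norm] using hx)]
      · rw [Set.indicator_of_notMem hx, Set.indicator_of_notMem
          (by simpa [Metric.mem_ball, dist_eq_norm] using hx)]
    simp_rw [heq]
    rw [lintegral_sub_right_eq_self
      (fun x => (Metric.ball (0:EuclideanSpace ℝ (Fin N)) 1).indicator ke x) y]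
    rw [lintegral_indicator measurableSet_ball]
  -- bound for ke away from the ball
  have hk_out : ∀ z : EuclideanSpace ℝ (Fin N), 1 ≤ ‖z‖ → ke z ≤ ENNReal.ofReal (Real.log 2) := by
    intro z hz
    rw [hke_def]
    apply ENNReal.ofReal_le_ofReal
    apply Real.log_le_log (by positivity)
    have h1 : 1/‖z‖ ≤ 1 := by
      rw [div_le_one (by linarith)]
      linarith
    linarith
  -- inner x-integral bound
  have hinner : ∀ y : EuclideanSpace ℝ (Fin N),
      ∫⁻ x, ke (x - y) * (Ew x)⁻¹ ∂volume ≤ Mtot := by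
    intro y
    have hindmeas : Measurable ((Metric.ball y 1).indicator (fun x => ke (x - y))) :=
      (hkmeas.comp (measurable_id.sub measurable_const)).indicator measurableSet_ball
    calc ∫⁻ x, ke (x - y) * (Ew x)⁻¹ ∂volume
        ≤ ∫⁻ x, ((Metric.ball y 1).indicator (fun x => ke (x - y)) x
            + ENNReal.ofReal (Real.log 2) * (Ew x)⁻¹) ∂volume := by
          apply lintegral_mono
          intro x
          show ke (x - y) * (Ew x)⁻¹ ≤ (Metric.ball y 1).indicator (fun x => ke (x - y)) x
            + ENNReal.ofReal (Real.log 2) * (Ew x)⁻¹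
          by_cases hx : x ∈ Metric.ball y 1
          · rw [Set.indicator_of_mem hx]
            calc ke (x-y) * (Ew x)⁻¹ ≤ ke (x-y) * 1 := mul_le_mul_right (hEwinv_le_one x) _
              _ = ke (x-y) := mul_one _
              _ ≤ _ := le_self_add
          · have hz : 1 ≤ ‖x - y‖ := by
              rw [Metric.mem_ball, dist_eq_norm, not_lt] at hx
              exact hx
            calc ke (x-y) * (Ew x)⁻¹ ≤ ENNReal.ofReal (Real.log 2) * (Ew x)⁻¹ :=
                  mul_le_mul_left (hk_out _ hz) _
              _ ≤ _ := le_add_self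
      _ = (∫⁻ x, (Metric.ball y 1).indicator (fun x => ke (x - y)) x ∂volume)
          + ENNReal.ofReal (Real.log 2) * ∫⁻ x, (Ew x)⁻¹ ∂volume := by
          rw [lintegral_add_left hindmeas]
          rw [lintegral_const_mul (f := fun x => (Ew x)⁻¹) _ hEwmeas.inv]
      _ = Mtot := by rw [htrans y, hMtot_def]
  -- the convolution-term bound
  have hker_prodmeas :
      Measurable (Function.uncurry fun (x y : EuclideanSpace ℝ (Fin N)) => ke (x - y) * G y * (Ew x)⁻¹) :=
    ((hkmeas.comp (measurable_fst.sub measurable_snd)).mul (hGmeas.comp measurable_snd)).mul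
      ((hEwmeas.comp measurable_fst).inv)
  have hS3 : ∫⁻ x, (∫⁻ y, ke (x - y) * G y ∂volume) * (Ew x)⁻¹ ∂volume ≤ Mtot * Itot := by
    have hswap : ∫⁻ x, (∫⁻ y, ke (x - y) * G y ∂volume) * (Ew x)⁻¹ ∂volume
        = ∫⁻ x, ∫⁻ y, ke (x - y) * G y * (Ew x)⁻¹ ∂volume ∂volume := by
      apply lintegral_congr
      intro x
      have hmy : Measurable fun y : EuclideanSpace ℝ (Fin N) => ke (x - y) * G y := by
        exact (hkmeas.comp (measurable_const.sub measurable_id)).mul hGmeas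
      exact (lintegral_mul_const _ hmy).symm
    rw [hswap, lintegral_lintegral_swap hker_prodmeas.aemeasurable]
    calc ∫⁻ y, ∫⁻ x, ke (x - y) * G y * (Ew x)⁻¹ ∂volume ∂volume
        = ∫⁻ y, (∫⁻ x, ke (x - y) * (Ew x)⁻¹ ∂volume) * G y ∂volume := by
          apply lintegral_congr
          intro y
          have hmx : Measurable fun x : EuclideanSpace ℝ (Fin N) => ke (x - y) * (Ew x)⁻¹ := by
            exact (hkmeas.comp (measurable_id.sub measurable_const)).mul hEwmeas.inv
          rw [← lintegral_mul_const _ hmx]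
          apply lintegral_congr
          intro x
          ring
      _ ≤ ∫⁻ y, Mtot * G y ∂volume :=
          lintegral_mono fun y => mul_le_mul_left (hinner y) _
      _ = Mtot * Itot := lintegral_const_mul _ hGmeas
  -- master pointwise bound
  have hmain : ∀ x, ENNReal.ofReal |φ x|
      ≤ ℓe x * Itot + Jtot + ∫⁻ y, ke (x - y) * G y ∂volume := by
    intro x
    have l1 : 0 ≤ Real.log (1+‖x‖) := Real.log_nonneg (by linarith [norm_nonneg x])
    calc ENNReal.ofReal |φ x| = (‖φ x‖₊ : ℝ≥0∞) := (Real.enorm_eq_ofReal_abs _).symm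
      _ ≤ ∫⁻ y, (‖Real.log (1/‖x-y‖) * g₁ y‖₊ : ℝ≥0∞) ∂volume := by
          rw [hφ' x]
          exact enorm_integral_le_lintegral_enorm _
      _ ≤ ∫⁻ y, (ℓe x + ℓe y + ke (x - y)) * G y ∂volume := by
          apply lintegral_mono
          intro y
          show (‖Real.log (1/‖x-y‖) * g₁ y‖₊ : ℝ≥0∞) ≤ (ℓe x + ℓe y + ke (x - y)) * G y
          have l2 : 0 ≤ Real.log (1+‖y‖) := Real.log_nonneg (by linarith [norm_nonneg y])
          have l3 : 0 ≤ Real.log (1+1/‖x-y‖) :=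
            Real.log_nonneg (le_add_of_nonneg_right (by positivity))
          rw [← enorm_eq_nnnorm, Real.enorm_eq_ofReal_abs, abs_mul, abs_of_nonneg (hg₁nonneg y)]
          have hb1 := aux_abs_log_inv ‖x-y‖ (norm_nonneg _)
          have hb2 := aux_log_triangle x y
          have hineq : |Real.log (1/‖x-y‖)|
              ≤ Real.log (1+‖x‖) + Real.log (1+‖y‖) + Real.log (1+1/‖x-y‖) := by linarith
          calc ENNReal.ofReal (|Real.log (1/‖x-y‖)| * g₁ y)
              ≤ ENNReal.ofReal ((Real.log (1+‖x‖) + Real.log (1+‖y‖) + Real.log (1+1/‖x-y‖)) * g₁ y) :=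
                ENNReal.ofReal_le_ofReal (mul_le_mul_of_nonneg_right hineq (hg₁nonneg y))
            _ = (ℓe x + ℓe y + ke (x - y)) * G y := by
                rw [hle_def, hke_def, hG_def]
                simp only
                rw [ENNReal.ofReal_mul (by positivity),
                  ENNReal.ofReal_add (add_nonneg l1 l2) l3, ENNReal.ofReal_add l1 l2]
      _ = ℓe x * Itot + Jtot + ∫⁻ y, ke (x - y) * G y ∂volume := by
          have hdist : ∀ y, (ℓe x + ℓe y + ke (x - y)) * G y
              = ℓe x * G y + (ℓe y * G y + ke (x - y) * G y) := fun y => by ring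
          simp_rw [hdist]
          rw [lintegral_add_left (f := fun y => ℓe x * G y) (measurable_const.mul hGmeas),
            lintegral_add_left (f := fun y => ℓe y * G y) (hℓmeas.mul hGmeas),
            lintegral_const_mul _ hGmeas]
          rw [hI_def, hJ_def]
          ring
  -- measurability of φ
  have hφmeas : AEStronglyMeasurable φ volume := by
    have hfm : StronglyMeasurable
        (Function.uncurry fun (x y : EuclideanSpace ℝ (Fin N)) => Real.log (1/‖x - y‖) * g₁ y) := by
      apply Measurable.stronglyMeasurable
      have : Measurable fun p : EuclideanSpace ℝ (Fin N) × EuclideanSpace ℝ (Fin N) =>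
          Real.log (1/‖p.1 - p.2‖) * g₁ p.2 := by
        apply Measurable.mul _ (hg₁meas.comp measurable_snd)
        apply Real.measurable_log.comp
        simp only [one_div]
        exact (measurable_fst.sub measurable_snd).norm.inv
      exact this
    have hsm := hfm.integral_prod_right (ν := volume)
    have hφeq : φ = fun x => ∫ y, Real.log (1/‖x - y‖) * g₁ y := funext hφ'
    rw [hφeq]
    exact hsm.aestronglyMeasurable
  refine ⟨((hφmeas.norm.mul hDmeas.inv.aestronglyMeasurable).congr
    (Filter.Eventually.of_forall fun x => by simp [Pi.mul_apply, Real.norm_eq_abs, div_eq_mul_inv, hD_def])), ?_⟩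
  rw [HasFiniteIntegral]
  calc ∫⁻ x, (‖|φ x| / D x‖₊ : ℝ≥0∞) ∂volume
      = ∫⁻ x, ENNReal.ofReal |φ x| / Ew x ∂volume := by
        apply lintegral_congr
        intro x
        show (‖|φ x| / D x‖₊ : ℝ≥0∞) = ENNReal.ofReal |φ x| / Ew x
        rw [← enorm_eq_nnnorm, Real.enorm_eq_ofReal (div_nonneg (abs_nonneg _) (hD0 x).le),
          ENNReal.ofReal_div_of_pos (hD0 x)]
    _ ≤ ∫⁻ x, (ℓe x * Itot + Jtot + ∫⁻ y, ke (x - y) * G y ∂volume) * (Ew x)⁻¹ ∂volume := by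
        apply lintegral_mono
        intro x
        show ENNReal.ofReal |φ x| / Ew x
          ≤ (ℓe x * Itot + Jtot + ∫⁻ y, ke (x - y) * G y ∂volume) * (Ew x)⁻¹
        rw [div_eq_mul_inv]
        exact mul_le_mul_left (hmain x) _
    _ = ∫⁻ x, (ℓe x * (Ew x)⁻¹ * Itot
          + (Jtot * (Ew x)⁻¹ + (∫⁻ y, ke (x - y) * G y ∂volume) * (Ew x)⁻¹)) ∂volume := by
        apply lintegral_congr
        intro x
        ring
    _ = (∫⁻ x, ℓe x * (Ew x)⁻¹ * Itot ∂volume)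
          + ((∫⁻ x, Jtot * (Ew x)⁻¹ ∂volume)
            + ∫⁻ x, (∫⁻ y, ke (x - y) * G y ∂volume) * (Ew x)⁻¹ ∂volume) := by
        rw [lintegral_add_left (f := fun x => ℓe x * (Ew x)⁻¹ * Itot) ((hℓmeas.mul hEwmeas.inv).mul_const _),
          lintegral_add_left (f := fun x => Jtot * (Ew x)⁻¹) (measurable_const.mul hEwmeas.inv)]
    _ < ∞ := by
        refine ENNReal.add_lt_top.2 ⟨?_, ENNReal.add_lt_top.2 ⟨?_, ?_⟩⟩
        · rw [lintegral_mul_const (f := fun x => ℓe x * (Ew x)⁻¹) _ (hℓmeas.mul hEwmeas.inv)]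
          exact ENNReal.mul_lt_top hT1 hItot
        · rw [lintegral_const_mul (f := fun x => (Ew x)⁻¹) _ hEwmeas.inv]
          exact ENNReal.mul_lt_top hJtot hT2
        · exact lt_of_le_of_lt hS3 (ENNReal.mul_lt_top hMtot hItot)
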